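/- arXiv:2405.07968 — 2 statements merged into one kernel-verified Lean document; each statement's English description precedes it below -/
import Mathlib

section
/- With the notation of the context: 𝒜₁⁻¹(im F_{n,[ℰ,Â]}) = A⁻¹(E·V^{n−1}_{[E,A,B,0]}) as subspaces of ℝ^n. -/
open Matrix

/-- The block matrix `F_{k,[E,A]}`: viewed as a `k × k` array of `m × n` blocks,
diagonal blocks equal `E`, superdiagonal blocks equal `A`, all other blocks zero. -/
noncomputable def Fmat (k : ℕ) {R C : Type*} [Fintype R] [Fintype C]
    (E A : Matrix R C ℝ) : Matrix (Fin k × R) (Fin k × C) ℝ :=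
  Matrix.of fun p q =>
    if q.1.val = p.1.val then E p.2 q.2
    else if q.1.val = p.1.val + 1 then A p.2 q.2
    else 0

/-- The matrix `F_{k,[E,A,K]}`: `F_{k,[E,A]}` with an extra block row appended at the
bottom, having `K` in the second block column and zeros elsewhere. -/
noncomputable def FmatK (k : ℕ) {R C : Type*} [Fintype R] [Fintype C] {r : ℕ}
    (E A : Matrix R C ℝ) (K : Matrix (Fin r) C ℝ) :
    Matrix ((Fin k × R) ⊕ Fin r) (Fin k × C) ℝ :=
  Matrix.of fun p q =>
    match p with
    | Sum.inl pr => Fmat k E A pr q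
    | Sum.inr i => if q.1.val = 1 then K i q.2 else 0

/-- The generalized Wong sequence `W^i_{[E,A,B,C]}`:
`W⁰ = {0}`, `W^{i+1} = E⁻¹(A·W^i + im B) ∩ ker C`. -/
noncomputable def WongW {R : Type*} [Fintype R] {n l p : ℕ}
    (E A : Matrix R (Fin n) ℝ) (B : Matrix R (Fin l) ℝ) (C : Matrix (Fin p) (Fin n) ℝ) :
    ℕ → Submodule ℝ (Fin n → ℝ)
  | 0 => ⊥
  | i + 1 =>
      (Submodule.comap E.mulVecLin
        (Submodule.map A.mulVecLin (WongW E A B C i) ⊔ LinearMap.range B.mulVecLin)) ⊓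
        LinearMap.ker C.mulVecLin

/-- The generalized Wong sequence `V^i_{[E,A,B,C]}`:
`V⁰ = ker C`, `V^{i+1} = A⁻¹(E·V^i + im B) ∩ ker C`. -/
noncomputable def WongV {R : Type*} [Fintype R] {n l p : ℕ}
    (E A : Matrix R (Fin n) ℝ) (B : Matrix R (Fin l) ℝ) (C : Matrix (Fin p) (Fin n) ℝ) :
    ℕ → Submodule ℝ (Fin n → ℝ)
  | 0 => LinearMap.ker C.mulVecLin
  | i + 1 =>
      (Submodule.comap A.mulVecLin
        (Submodule.map E.mulVecLin (WongV E A B C i) ⊔ LinearMap.range B.mulVecLin)) ⊓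
        LinearMap.ker C.mulVecLin

/-- The block matrix `𝒜`, an `n × n` array of `m × n` blocks with `A` in block
position `(n,1)` and zeros elsewhere. -/
noncomputable def calA {m n : ℕ} (A : Matrix (Fin m) (Fin n) ℝ) :
    Matrix (Fin n × Fin m) (Fin n × Fin n) ℝ :=
  Matrix.of fun p q => if p.1.val = n - 1 ∧ q.1.val = 0 then A p.2 q.2 else 0

/-- The block column `𝒜₁`, an `n × 1` array of `m × n` blocks with `A` in the bottom
block and zeros above. -/
noncomputable def calA1 {m n : ℕ} (A : Matrix (Fin m) (Fin n) ℝ) :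
    Matrix (Fin n × Fin m) (Fin n) ℝ :=
  Matrix.of fun p j => if p.1.val = n - 1 then A p.2 j else 0

/-- The block row `[K 0 … 0]` (`k` block columns) with `K` in the first block column. -/
noncomputable def firstBlockCol {r n : ℕ} (k : ℕ) (K : Matrix (Fin r) (Fin n) ℝ) :
    Matrix (Fin r) (Fin k × Fin n) ℝ :=
  Matrix.of fun i q => if q.1.val = 0 then K i q.2 else 0

section aux
variable {m n l : ℕ} (E A : Matrix (Fin m) (Fin n) ℝ) (B : Matrix (Fin m) (Fin l) ℝ)

lemma calA1_mulVec (x : Fin n → ℝ) (i : Fin n) (r : Fin m) :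
    (calA1 A).mulVec x (i, r) = if i.val = n - 1 then A.mulVec x r else 0 := by
  unfold calA1 Matrix.mulVec
  by_cases h : i.val = n - 1 <;> simp [h, dotProduct]

lemma sum_ite_val (i : Fin n) (f : Fin n → ℝ) :
    ∑ j : Fin n, (if j.val = i.val then f j else 0) = f i := by
  simp [Fin.val_eq_val]

lemma sum_ite_val_succ (i : Fin n) (f : Fin n → ℝ) :
    ∑ j : Fin n, (if j.val = i.val + 1 then f j else 0) =
      if h : i.val + 1 < n then f ⟨i.val + 1, h⟩ else 0 := by
  split_ifs with h
  · have e : ∀ j : Fin n, (j.val = i.val + 1) = (j = ⟨i.val + 1, h⟩) := fun j => by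
      simp [Fin.ext_iff]
    simp only [e]
    simp
  · apply Finset.sum_eq_zero
    intro j _
    rw [if_neg]
    omega

lemma Fmat_mulVec (z : Fin n × (Fin n ⊕ Fin l) → ℝ) (i : Fin n) (r : Fin m) :
    (Fmat n (fromCols E (0 : Matrix (Fin m) (Fin l) ℝ))
        (fromCols A B)).mulVec z (i, r)
      = E.mulVec (fun c => z (i, Sum.inl c)) r
        + if h : i.val + 1 < n then
            A.mulVec (fun c => z (⟨i.val + 1, h⟩, Sum.inl c)) r
            + B.mulVec (fun c => z (⟨i.val + 1, h⟩, Sum.inr c)) r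
          else 0 := by
  have key : ∀ j : Fin n, ∀ M : Matrix (Fin m) (Fin n ⊕ Fin l) ℝ,
      (∑ c : Fin n ⊕ Fin l, M r c * z (j, c)) = M.mulVec (fun c => z (j, c)) r := by
    intro j M; simp [Matrix.mulVec, dotProduct]
  have helim : ∀ j : Fin n, ∀ P : Matrix (Fin m) (Fin n) ℝ,
      ∀ S : Matrix (Fin m) (Fin l) ℝ,
      (fromCols P S).mulVec (fun c => z (j, c)) r
        = P.mulVec (fun c => z (j, Sum.inl c)) r + S.mulVec (fun c => z (j, Sum.inr c)) r := by
    intro j P S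
    have hz : (fun c => z (j, c)) =
        Sum.elim (fun c => z (j, Sum.inl c)) (fun c => z (j, Sum.inr c)) := by
      funext c; cases c <;> rfl
    rw [hz, fromCols_mulVec_sumElim]
    rfl
  have hj : ∀ j : Fin n,
      (∑ c : Fin n ⊕ Fin l,
          Fmat n (fromCols E (0 : Matrix (Fin m) (Fin l) ℝ)) (fromCols A B) (i, r) (j, c)
            * z (j, c))
        = (if j.val = i.val then
            (fromCols E (0 : Matrix (Fin m) (Fin l) ℝ)).mulVec (fun c => z (j, c)) r else 0)
          + (if j.val = i.val + 1 then (fromCols A B).mulVec (fun c => z (j, c)) r else 0) := by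
    intro j
    by_cases h1 : j.val = i.val
    · have h2 : ¬ j.val = i.val + 1 := by omega
      rw [if_pos h1, if_neg h2, add_zero, ← key j]
      exact Finset.sum_congr rfl fun c _ => by simp [Fmat, h1, h2]
    · by_cases h2 : j.val = i.val + 1
      · rw [if_neg h1, if_pos h2, zero_add, ← key j]
        exact Finset.sum_congr rfl fun c _ => by simp [Fmat, h1, h2]
      · rw [if_neg h1, if_neg h2, add_zero]
        exact Finset.sum_eq_zero fun c _ => by simp [Fmat, h1, h2]
  calc (Fmat n (fromCols E 0) (fromCols A B)).mulVec z (i, r)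
      = ∑ j : Fin n, ∑ c : Fin n ⊕ Fin l,
          Fmat n (fromCols E 0) (fromCols A B) (i, r) (j, c) * z (j, c) := by
        simp [Matrix.mulVec, dotProduct, Fintype.sum_prod_type]
    _ = _ := by
        rw [Finset.sum_congr rfl fun j _ => hj j, Finset.sum_add_distrib,
          sum_ite_val, sum_ite_val_succ]
        rw [helim i E 0]
        congr 1
        · simp
        · split_ifs with h
          · exact helim _ A B
          · rfl
end aux


section chain
variable {m n l : ℕ} (E A : Matrix (Fin m) (Fin n) ℝ) (B : Matrix (Fin m) (Fin l) ℝ)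

lemma ker_zero_top : LinearMap.ker ((0 : Matrix (Fin 1) (Fin n) ℝ)).mulVecLin = ⊤ := by
  rw [Matrix.mulVecLin_zero, LinearMap.ker_zero]

lemma chain_iff (k : ℕ) (y : Fin m → ℝ) :
    y ∈ Submodule.map E.mulVecLin (WongV E A B (0 : Matrix (Fin 1) (Fin n) ℝ) k) ↔
      ∃ (v : ℕ → Fin n → ℝ) (u : ℕ → Fin l → ℝ),
        E.mulVec (v k) = y ∧
        ∀ i < k, E.mulVec (v i) + A.mulVec (v (i + 1)) + B.mulVec (u (i + 1)) = 0 := by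
  induction k generalizing y with
  | zero =>
    rw [show WongV E A B (0 : Matrix (Fin 1) (Fin n) ℝ) 0
        = LinearMap.ker ((0 : Matrix (Fin 1) (Fin n) ℝ)).mulVecLin from rfl, ker_zero_top]
    constructor
    · rintro ⟨w, -, hw⟩
      exact ⟨fun _ => w, fun _ => 0, hw, fun i hi => absurd hi (Nat.not_lt_zero i)⟩
    · rintro ⟨v, u, hv, -⟩
      exact ⟨v 0, trivial, hv⟩
  | succ k ih =>
    constructor
    · rintro ⟨w, hw, rfl⟩
      have hw1 : A.mulVecLin w ∈
          Submodule.map E.mulVecLin (WongV E A B (0 : Matrix (Fin 1) (Fin n) ℝ) k)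
            ⊔ LinearMap.range B.mulVecLin :=
        Submodule.mem_comap.mp (Submodule.mem_inf.mp hw).1
      rw [Submodule.mem_sup] at hw1
      obtain ⟨y1, hy1, y2, hy2, hsum⟩ := hw1
      obtain ⟨u2, hu2⟩ := hy2
      have hy1' : -y1 ∈ Submodule.map E.mulVecLin (WongV E A B (0 : Matrix (Fin 1) (Fin n) ℝ) k) :=
        Submodule.neg_mem _ hy1
      obtain ⟨v, u, hv, hch⟩ := (ih (-y1)).mp hy1'
      refine ⟨fun i => if i = k + 1 then w else v i,
              fun i => if i = k + 1 then -u2 else u i, by simp, ?_⟩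
      intro i hi
      rcases Nat.lt_succ_iff_lt_or_eq.mp hi with hi' | rfl
      · have e1 : (i = k + 1) = False := by simp; omega
        have e2 : (i + 1 = k + 1) = False := by simp; omega
        simp only [e1, e2, if_false]
        exact hch i hi'
      · have e1 : (i = i + 1) = False := by simp
        have hAw : A.mulVec w = y1 + B.mulVec u2 := by
          have h' := hsum
          rw [← hu2] at h'
          simpa [Matrix.mulVecLin_apply] using h'.symm
        simp only [e1, if_false, if_true]
        rw [hv, hAw]
        simp [Matrix.mulVec_neg]
    · rintro ⟨v, u, rfl, hch⟩
      refine ⟨v (k + 1), ?_, rfl⟩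
      refine Submodule.mem_inf.mpr ⟨Submodule.mem_comap.mpr (Submodule.mem_sup.mpr ?_),
        by rw [ker_zero_top]; trivial⟩
      have hEvk : (E.mulVec (v k)) ∈
          Submodule.map E.mulVecLin (WongV E A B (0 : Matrix (Fin 1) (Fin n) ℝ) k) :=
        (ih _).mpr ⟨v, u, rfl, fun i hi => hch i (by omega)⟩
      refine ⟨-(E.mulVec (v k)), Submodule.neg_mem _ hEvk,
        -(B.mulVec (u (k + 1))), ⟨-(u (k+1)), by simp [Matrix.mulVecLin_apply, Matrix.mulVec_neg]⟩, ?_⟩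
      have := hch k (by omega)
      rw [Matrix.mulVecLin_apply]
      linear_combination (norm := module) -this
end chain


/-- Identity (3.10): `𝒜₁⁻¹(im F_{n,[ℰ,Â]}) = A⁻¹(E·V^{n−1}_{[E,A,B,0]})`. -/
theorem stmt_8 {m n l : ℕ} (hn : 1 ≤ n)
    (E A : Matrix (Fin m) (Fin n) ℝ) (B : Matrix (Fin m) (Fin l) ℝ) :
    Submodule.comap (calA1 A).mulVecLin
        (LinearMap.range (Fmat n (Matrix.fromCols E (0 : Matrix (Fin m) (Fin l) ℝ))
          (Matrix.fromCols A B)).mulVecLin) =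
      Submodule.comap A.mulVecLin
        (Submodule.map E.mulVecLin
          (WongV E A B (0 : Matrix (Fin 1) (Fin n) ℝ) (n - 1))) := by
  ext x
  simp only [Submodule.mem_comap, LinearMap.mem_range, Matrix.mulVecLin_apply]
  rw [chain_iff E A B (n - 1) (A.mulVec x)]
  constructor
  · rintro ⟨z, hz⟩
    refine ⟨fun i => if h : i < n then (fun c => z (⟨i, h⟩, Sum.inl c)) else 0,
            fun i => if h : i < n then (fun c => z (⟨i, h⟩, Sum.inr c)) else 0, ?_, ?_⟩
    · have hlt : n - 1 < n := by omega
      funext r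
      have h1 := congrFun hz (⟨n - 1, hlt⟩, r)
      rw [Fmat_mulVec, calA1_mulVec] at h1
      have hd : ¬ ((⟨n - 1, hlt⟩ : Fin n).val + 1 < n) := by simp; omega
      rw [dif_neg hd, add_zero, if_pos rfl] at h1
      simp only [dif_pos hlt]
      exact h1
    · intro i hi
      have hi1 : i < n := by omega
      have hi2 : i + 1 < n := by omega
      funext r
      have h1 := congrFun hz (⟨i, hi1⟩, r)
      rw [Fmat_mulVec, calA1_mulVec] at h1
      rw [dif_pos (show (⟨i, hi1⟩ : Fin n).val + 1 < n from hi2)] at h1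
      rw [if_neg (show ¬ (⟨i, hi1⟩ : Fin n).val = n - 1 by simp; omega)] at h1
      simp only [Pi.add_apply, Pi.zero_apply, dif_pos hi1, dif_pos hi2]
      simp only [Fin.val_mk] at h1
      linarith [h1]
  · rintro ⟨v, u, hv, hch⟩
    refine ⟨fun p => Sum.elim (v p.1.val) (u p.1.val) p.2, ?_⟩
    funext p
    obtain ⟨i, r⟩ := p
    rw [Fmat_mulVec, calA1_mulVec]
    by_cases h : i.val = n - 1
    · have hd : ¬ (i.val + 1 < n) := by omega
      rw [dif_neg hd, add_zero, if_pos h]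
      simpa [h] using congrFun hv r
    · have hlt : i.val + 1 < n := by have := i.isLt; omega
      rw [dif_pos hlt, if_neg h]
      have h1 := congrFun (hch i.val (by have := i.isLt; omega)) r
      simp only [Pi.add_apply, Pi.zero_apply] at h1
      simp only [Sum.elim_inl, Sum.elim_inr]
      linarith [h1]
end

section
/- With the notation of the context: rank of the block matrix [F_{n,[ℰ,Â]} 𝒜; 0 𝒞; 0 F_{n,[Ē,Ā]}; 0 𝒦] equals rank of [F_{n,[ℰ,Â]} 𝒜; 0 𝒞; 0 F_{n,[Ē,Ā]}] if and only if A⁻¹(E·V^{n−1}_{[E,A,B,0]}) ∩ W*_{[E,A,0,C]} ⊆ ker K. -/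
open Matrix

open Module
set_option linter.unusedSectionVars false


section RankAux
variable {α β γ : Type*} [Fintype α] [Fintype β] [Fintype γ]

lemma ker_fromRows_aux (M : Matrix α β ℝ) (N : Matrix γ β ℝ) :
    LinearMap.ker (Matrix.fromRows M N).mulVecLin =
      LinearMap.ker M.mulVecLin ⊓ LinearMap.ker N.mulVecLin := by
  ext v
  simp [LinearMap.mem_ker, Matrix.mulVecLin_apply, funext_iff, Sum.forall]

lemma rank_fromRows_eq_iff (M : Matrix α β ℝ) (N : Matrix γ β ℝ) :
    (Matrix.fromRows M N).rank = M.rank ↔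
      LinearMap.ker M.mulVecLin ≤ LinearMap.ker N.mulVecLin := by
  have h1 := LinearMap.finrank_range_add_finrank_ker M.mulVecLin
  have h2 := LinearMap.finrank_range_add_finrank_ker (Matrix.fromRows M N).mulVecLin
  have hM : M.rank = finrank ℝ (LinearMap.range M.mulVecLin) := rfl
  have hMN : (Matrix.fromRows M N).rank
      = finrank ℝ (LinearMap.range (Matrix.fromRows M N).mulVecLin) := rfl
  constructor
  · intro h
    have hk : finrank ℝ (LinearMap.ker (Matrix.fromRows M N).mulVecLin)
        = finrank ℝ (LinearMap.ker M.mulVecLin) := by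
      rw [hM, hMN] at h; omega
    rw [ker_fromRows_aux] at hk
    have heq := Submodule.eq_of_le_of_finrank_le
      (inf_le_left : LinearMap.ker M.mulVecLin ⊓ LinearMap.ker N.mulVecLin ≤ _) hk.ge
    exact inf_eq_left.mp heq
  · intro h
    have hk : LinearMap.ker (Matrix.fromRows M N).mulVecLin = LinearMap.ker M.mulVecLin := by
      rw [ker_fromRows_aux]; exact inf_eq_left.mpr h
    rw [hM, hMN]; rw [hk] at h2; omega

lemma rank_submatrix_row_equiv (A : Matrix α β ℝ) (e : γ ≃ α) :
    (A.submatrix e (Equiv.refl β)).rank = A.rank := by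
  rw [Matrix.rank, Matrix.rank, Matrix.mulVecLin_submatrix,
    show LinearMap.funLeft ℝ ℝ ⇑(Equiv.refl β).symm = LinearMap.id from rfl]
  rw [LinearMap.comp_id, LinearMap.range_comp,
    show LinearMap.funLeft ℝ ℝ ⇑e = (LinearEquiv.funCongrLeft ℝ ℝ e : (α → ℝ) →ₗ[ℝ] (γ → ℝ)) from rfl,
    LinearEquiv.finrank_map_eq]

lemma Fmat_mulVec_s9 {k : ℕ} {R C : Type*} [Fintype R] [Fintype C]
    (E A : Matrix R C ℝ) (u : Fin k × C → ℝ) (i : Fin k) (s : R) :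
    (Fmat k E A *ᵥ u) (i, s) =
      (E *ᵥ fun t => u (i, t)) s +
        (if h : (i : ℕ) + 1 < k then (A *ᵥ fun t => u (⟨(i : ℕ) + 1, h⟩, t)) s else 0) := by
  classical
  have expand : (Fmat k E A *ᵥ u) (i, s)
      = ∑ j : Fin k, ∑ t : C,
          (if (j : ℕ) = (i : ℕ) then E s t else if (j : ℕ) = (i : ℕ) + 1 then A s t else 0)
            * u (j, t) := by
    rw [Matrix.mulVec, dotProduct, Fintype.sum_prod_type]
    rfl
  rw [expand]
  by_cases h : (i : ℕ) + 1 < k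
  · rw [dif_pos h]
    have step : ∀ j : Fin k,
        (∑ t : C, (if (j : ℕ) = (i : ℕ) then E s t
            else if (j : ℕ) = (i : ℕ) + 1 then A s t else 0) * u (j, t))
        = (if j = i then ∑ t, E s t * u (j, t) else 0)
          + (if j = (⟨(i : ℕ) + 1, h⟩ : Fin k) then ∑ t, A s t * u (j, t) else 0) := by
      intro j
      rcases eq_or_ne j i with rfl | hji
      · have h2 : ¬ ((j : ℕ) = (j : ℕ) + 1) := by omega
        have h3 : ¬ (j = (⟨(j : ℕ) + 1, h⟩ : Fin k)) := by
          simp [Fin.ext_iff]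
        simp [h2, h3, Finset.mul_sum]
      · have h1 : ¬ ((j : ℕ) = (i : ℕ)) := fun hv => hji (Fin.ext hv)
        rcases eq_or_ne (j : ℕ) ((i : ℕ) + 1) with hj2 | hj2
        · have hje : j = (⟨(i : ℕ) + 1, h⟩ : Fin k) := Fin.ext hj2
          have h4 : ¬ ((⟨(i : ℕ) + 1, h⟩ : Fin k) = i) := by simp [Fin.ext_iff]
          simp [h1, hj2, hje, h4, hji]
        · have hje : ¬ (j = (⟨(i : ℕ) + 1, h⟩ : Fin k)) := by
            simp [Fin.ext_iff, hj2]
          have h4 : ¬ ((⟨(i : ℕ) + 1, h⟩ : Fin k) = i) := by simp [Fin.ext_iff]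
          simp [h1, hj2, hje, h4, hji]
    rw [Finset.sum_congr rfl fun j _ => step j, Finset.sum_add_distrib,
      Finset.sum_ite_eq' Finset.univ i, Finset.sum_ite_eq' Finset.univ
        (⟨(i : ℕ) + 1, h⟩ : Fin k)]
    simp [Matrix.mulVec, dotProduct]
  · rw [dif_neg h]
    have step : ∀ j : Fin k,
        (∑ t : C, (if (j : ℕ) = (i : ℕ) then E s t
            else if (j : ℕ) = (i : ℕ) + 1 then A s t else 0) * u (j, t))
        = (if j = i then ∑ t, E s t * u (j, t) else 0) := by
      intro j
      rcases eq_or_ne j i with rfl | hji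
      · have h2 : ¬ ((j : ℕ) = (j : ℕ) + 1) := by omega
        simp [h2]
      · have h1 : ¬ ((j : ℕ) = (i : ℕ)) := fun hv => hji (Fin.ext hv)
        have h2 : ¬ ((j : ℕ) = (i : ℕ) + 1) := by
          have := j.isLt; omega
        simp [h1, h2, hji]
    rw [Finset.sum_congr rfl fun j _ => step j, Finset.sum_ite_eq' Finset.univ i]
    simp [Matrix.mulVec, dotProduct]

lemma calA_mulVec {m n : ℕ} (A : Matrix (Fin m) (Fin n) ℝ) (hn : 0 < n)
    (z : Fin n × Fin n → ℝ) (i : Fin n) (s : Fin m) :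
    (calA A *ᵥ z) (i, s) =
      if (i : ℕ) = n - 1 then (A *ᵥ fun t => z (⟨0, hn⟩, t)) s else 0 := by
  classical
  have expand : (calA A *ᵥ z) (i, s)
      = ∑ j : Fin n, ∑ t : Fin n,
          (if (i : ℕ) = n - 1 ∧ (j : ℕ) = 0 then A s t else 0) * z (j, t) := by
    rw [Matrix.mulVec, dotProduct, Fintype.sum_prod_type]
    rfl
  rw [expand]
  by_cases hi : (i : ℕ) = n - 1
  · rw [if_pos hi]
    have step : ∀ j : Fin n,
        (∑ t : Fin n, (if (i : ℕ) = n - 1 ∧ (j : ℕ) = 0 then A s t else 0) * z (j, t))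
        = (if j = (⟨0, hn⟩ : Fin n) then ∑ t, A s t * z (j, t) else 0) := by
      intro j
      rcases eq_or_ne j (⟨0, hn⟩ : Fin n) with rfl | hj
      · simp [hi]
      · have : ¬ ((j : ℕ) = 0) := by simpa [Fin.ext_iff] using hj
        simp [this, hj]
    rw [Finset.sum_congr rfl fun j _ => step j, Finset.sum_ite_eq' Finset.univ
      (⟨0, hn⟩ : Fin n)]
    simp [Matrix.mulVec, dotProduct]
  · rw [if_neg hi]
    simp [hi]

lemma firstBlockCol_mulVec {r n k : ℕ} (K : Matrix (Fin r) (Fin n) ℝ) (hk : 0 < k)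
    (z : Fin k × Fin n → ℝ) (i : Fin r) :
    (firstBlockCol k K *ᵥ z) i = (K *ᵥ fun t => z (⟨0, hk⟩, t)) i := by
  classical
  have expand : (firstBlockCol k K *ᵥ z) i
      = ∑ j : Fin k, ∑ t : Fin n, (if (j : ℕ) = 0 then K i t else 0) * z (j, t) := by
    rw [Matrix.mulVec, dotProduct, Fintype.sum_prod_type]
    rfl
  rw [expand]
  have step : ∀ j : Fin k,
      (∑ t : Fin n, (if (j : ℕ) = 0 then K i t else 0) * z (j, t))
      = (if j = (⟨0, hk⟩ : Fin k) then ∑ t, K i t * z (j, t) else 0) := by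
    intro j
    rcases eq_or_ne j (⟨0, hk⟩ : Fin k) with rfl | hj
    · simp
    · have : ¬ ((j : ℕ) = 0) := by simpa [Fin.ext_iff] using hj
      simp [this, hj]
  rw [Finset.sum_congr rfl fun j _ => step j, Finset.sum_ite_eq' Finset.univ
    (⟨0, hk⟩ : Fin k)]
  simp [Matrix.mulVec, dotProduct]

section Wong
variable {m n l p : ℕ} (E A : Matrix (Fin m) (Fin n) ℝ) (B : Matrix (Fin m) (Fin l) ℝ)
  (C : Matrix (Fin p) (Fin n) ℝ)

lemma wongW_le_succ : ∀ k, WongW E A B C k ≤ WongW E A B C (k + 1)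
  | 0 => bot_le
  | k + 1 =>
      inf_le_inf_right _ (Submodule.comap_mono
        (sup_le_sup_right (Submodule.map_mono (wongW_le_succ k)) _))

lemma wongW_mono : Monotone (WongW E A B C) :=
  monotone_nat_of_le_succ (wongW_le_succ E A B C)

lemma wongW_le_n (k : ℕ) : WongW E A B C k ≤ WongW E A B C n := by
  have hex : ∃ j, j ≤ n ∧ WongW E A B C j = WongW E A B C (j + 1) := by
    by_contra hc
    push_neg at hc
    have grow : ∀ j, j ≤ n + 1 → j ≤ finrank ℝ (WongW E A B C j : Submodule ℝ (Fin n → ℝ)) := by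
      intro j
      induction j with
      | zero => intro _; exact Nat.zero_le _
      | succ j ih =>
          intro hj
          have hlt : WongW E A B C j < WongW E A B C (j + 1) :=
            lt_of_le_of_ne (wongW_le_succ E A B C j) (hc j (by omega))
          have h1 := Submodule.finrank_lt_finrank_of_lt hlt
          have h2 := ih (by omega)
          omega
    have h1 := grow (n + 1) le_rfl
    have h2 : finrank ℝ (WongW E A B C (n + 1) : Submodule ℝ (Fin n → ℝ)) ≤ n := by
      have h3 := Submodule.finrank_le (WongW E A B C (n + 1))
      simpa [Module.finrank_fin_fun] using h3
    omega
  obtain ⟨j, hj, hstab⟩ := hex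
  have hconst : ∀ t, WongW E A B C (j + t) = WongW E A B C j := by
    intro t
    induction t with
    | zero => rfl
    | succ t ih =>
        show WongW E A B C (j + t + 1) = WongW E A B C j
        have hs : WongW E A B C (j + t + 1) = WongW E A B C (j + 1) := by
          simp only [WongW]
          rw [ih]
        rw [hs, ← hstab]
  by_cases hk : k ≤ n
  · exact wongW_mono E A B C hk
  · have h1 : WongW E A B C k = WongW E A B C j := by
      have hkj : k = j + (k - j) := by omega
      rw [hkj, hconst]
    rw [h1]
    exact wongW_mono E A B C hj

lemma wongW_iSup : (⨆ i, WongW E A B C i) = WongW E A B C n :=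
  le_antisymm (iSup_le (wongW_le_n E A B C)) (le_iSup _ n)

lemma wongW_chain :
    ∀ (k : ℕ) (z : Fin n → ℝ), z ∈ WongW E A (0 : Matrix (Fin m) (Fin 1) ℝ) C k →
    ∃ Z : ℕ → Fin n → ℝ, Z 0 = z ∧
      (∀ j, Z j ∈ WongW E A (0 : Matrix (Fin m) (Fin 1) ℝ) C (k - j)) ∧
      (∀ j, E *ᵥ Z j + A *ᵥ Z (j + 1) = 0) ∧ (∀ j, C *ᵥ Z j = 0)
  | 0, z, hz => by
    have hz0 : z = 0 := by simpa [WongW] using hz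
    subst hz0
    exact ⟨0, rfl, fun j => Submodule.zero_mem _,
      fun j => by simp, fun j => by simp⟩
  | k + 1, z, hz => by
    have hzc := hz
    simp only [WongW] at hzc
    rw [Submodule.mem_inf] at hzc
    obtain ⟨hz1, hz2⟩ := hzc
    rw [Submodule.mem_comap] at hz1
    simp only [Matrix.mulVecLin_zero, LinearMap.range_zero, sup_bot_eq] at hz1
    obtain ⟨z', hz', hAz⟩ := Submodule.mem_map.mp hz1
    obtain ⟨Z', hZ0, hmem, hchain, hCc⟩ := wongW_chain k (-z') (neg_mem hz')
    refine ⟨fun j => Nat.casesOn j z (fun j' => Z' j'), rfl, ?_, ?_, ?_⟩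
    · intro j
      cases j with
      | zero => simpa using hz
      | succ j' => simpa [Nat.succ_sub_succ] using hmem j'
    · intro j
      cases j with
      | zero =>
          show E *ᵥ z + A *ᵥ Z' 0 = 0
          rw [hZ0, Matrix.mulVec_neg]
          have : A *ᵥ z' = E *ᵥ z := hAz
          rw [this]
          simp
      | succ j' => exact hchain j'
    · intro j
      cases j with
      | zero => exact hz2
      | succ j' => exact hCc j'

lemma wongW_back :
    ∀ (k : ℕ) (Z : ℕ → Fin n → ℝ),
    (∀ j, E *ᵥ Z j + A *ᵥ Z (j + 1) = 0) → (∀ j, C *ᵥ Z j = 0) → Z k = 0 →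
    Z 0 ∈ WongW E A (0 : Matrix (Fin m) (Fin 1) ℝ) C k
  | 0, Z, _, _, hZk => by rw [hZk]; exact Submodule.zero_mem _
  | k + 1, Z, hch, hC, hZk => by
    have h1 : Z 1 ∈ WongW E A (0 : Matrix (Fin m) (Fin 1) ℝ) C k :=
      wongW_back k (fun j => Z (j + 1)) (fun j => hch (j + 1)) (fun j => hC (j + 1)) hZk
    simp only [WongW]
    refine Submodule.mem_inf.mpr ⟨Submodule.mem_comap.mpr ?_, ?_⟩
    · refine Submodule.mem_sup_left (Submodule.mem_map.mpr ⟨-(Z 1), neg_mem h1, ?_⟩)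
      show A *ᵥ (-(Z 1)) = E *ᵥ Z 0
      rw [Matrix.mulVec_neg]
      exact neg_eq_of_add_eq_zero_left (hch 0)
    · exact hC 0

lemma wongV_chain :
    ∀ (k : ℕ) (v : Fin n → ℝ), v ∈ WongV E A B (0 : Matrix (Fin 1) (Fin n) ℝ) k →
    ∃ (X : ℕ → Fin n → ℝ) (Wc : ℕ → Fin l → ℝ),
      X k = v ∧ ∀ i, i < k → E *ᵥ X i + A *ᵥ X (i + 1) + B *ᵥ Wc (i + 1) = 0
  | 0, v, _ => ⟨fun _ => v, fun _ => 0, rfl, fun i hi => absurd hi (Nat.not_lt_zero i)⟩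
  | k + 1, v, hv => by
    simp only [WongV] at hv
    rw [Submodule.mem_inf] at hv
    obtain ⟨hv1, _⟩ := hv
    rw [Submodule.mem_comap] at hv1
    obtain ⟨y, hy, b, hb, hsum⟩ := Submodule.mem_sup.mp hv1
    obtain ⟨u, hu, hyu⟩ := Submodule.mem_map.mp hy
    obtain ⟨w0, hw0⟩ := hb
    obtain ⟨X', Wc', hX'k, hchain⟩ := wongV_chain k (-u) (neg_mem hu)
    refine ⟨fun i => if i = k + 1 then v else X' i,
      fun i => if i = k + 1 then -w0 else Wc' i, by simp, ?_⟩
    intro i hik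
    rcases Nat.lt_succ_iff_lt_or_eq.mp hik with hik' | rfl
    · have n1 : i ≠ k + 1 := by omega
      have n2 : i + 1 ≠ k + 1 := by omega
      have n3 : i ≠ k := by omega
      simpa [n1, n2, n3] using hchain i hik'
    · have n1 : i ≠ i + 1 := by omega
      simp only [if_neg n1, if_pos rfl, if_true]
      rw [hX'k]
      have hAv : A *ᵥ v = E *ᵥ u + B *ᵥ w0 := by
        rw [← Matrix.mulVecLin_apply A, ← hsum, ← hyu, ← hw0]
        rfl
      rw [Matrix.mulVec_neg, Matrix.mulVec_neg, hAv]
      abel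

lemma wongV_forward :
    ∀ (k : ℕ) (X : ℕ → Fin n → ℝ) (Wc : ℕ → Fin l → ℝ),
    (∀ i, i < k → E *ᵥ X i + A *ᵥ X (i + 1) + B *ᵥ Wc (i + 1) = 0) →
    X k ∈ WongV E A B (0 : Matrix (Fin 1) (Fin n) ℝ) k
  | 0, X, Wc, _ => by simp [WongV, Matrix.mulVecLin_zero]
  | k + 1, X, Wc, hch => by
    have hk : X k ∈ WongV E A B (0 : Matrix (Fin 1) (Fin n) ℝ) k :=
      wongV_forward k X Wc (fun i hi => hch i (by omega))
    simp only [WongV]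
    refine Submodule.mem_inf.mpr ⟨Submodule.mem_comap.mpr ?_, ?_⟩
    · refine Submodule.mem_sup.mpr ⟨E.mulVecLin (-(X k)),
        Submodule.mem_map.mpr ⟨-(X k), neg_mem hk, rfl⟩,
        B.mulVecLin (-(Wc (k + 1))), LinearMap.mem_range.mpr ⟨-(Wc (k + 1)), rfl⟩, ?_⟩
      have h := hch k (by omega)
      simp only [Matrix.mulVecLin_apply, Matrix.mulVec_neg]
      rw [← sub_eq_zero]
      have h2 : -(E *ᵥ X k) + -(B *ᵥ Wc (k + 1)) - A *ᵥ X (k + 1)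
          = -(E *ᵥ X k + A *ᵥ X (k + 1) + B *ᵥ Wc (k + 1)) := by abel
      rw [h2, h, neg_zero]
    · simp [LinearMap.mem_ker, Matrix.mulVecLin_zero]

section Kernel
variable {m n l p r : ℕ}

noncomputable def M0 (E A : Matrix (Fin m) (Fin n) ℝ) (B : Matrix (Fin m) (Fin l) ℝ)
    (C : Matrix (Fin p) (Fin n) ℝ) :
    Matrix ((Fin n × Fin m) ⊕ (Fin p ⊕ Fin n × (Fin m ⊕ Fin p)))
      ((Fin n × (Fin n ⊕ Fin l)) ⊕ Fin n × Fin n) ℝ :=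
  Matrix.fromBlocks
    (Fmat n (Matrix.fromCols E (0 : Matrix (Fin m) (Fin l) ℝ)) (Matrix.fromCols A B))
    (calA A) 0
    (Matrix.fromRows (firstBlockCol n C)
      (Fmat n (Matrix.fromRows E (0 : Matrix (Fin p) (Fin n) ℝ)) (Matrix.fromRows A C)))

noncomputable def NK {l : ℕ} (K : Matrix (Fin r) (Fin n) ℝ) :
    Matrix (Fin r) ((Fin n × (Fin n ⊕ Fin l)) ⊕ Fin n × Fin n) ℝ :=
  Matrix.fromCols 0 (firstBlockCol n K)

def seqX (v : (Fin n × (Fin n ⊕ Fin l)) ⊕ Fin n × Fin n → ℝ) (i : ℕ) : Fin n → ℝ :=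
  if h : i < n then fun t => v (Sum.inl (⟨i, h⟩, Sum.inl t)) else 0

def seqW (v : (Fin n × (Fin n ⊕ Fin l)) ⊕ Fin n × Fin n → ℝ) (i : ℕ) : Fin l → ℝ :=
  if h : i < n then fun t => v (Sum.inl (⟨i, h⟩, Sum.inr t)) else 0

def seqZ (v : (Fin n × (Fin n ⊕ Fin l)) ⊕ Fin n × Fin n → ℝ) (j : ℕ) : Fin n → ℝ :=
  if h : j < n then fun t => v (Sum.inr (⟨j, h⟩, t)) else 0

lemma mem_ker_M0 (hn : 1 ≤ n) (E A : Matrix (Fin m) (Fin n) ℝ)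
    (B : Matrix (Fin m) (Fin l) ℝ) (C : Matrix (Fin p) (Fin n) ℝ)
    (v : (Fin n × (Fin n ⊕ Fin l)) ⊕ Fin n × Fin n → ℝ) :
    M0 E A B C *ᵥ v = 0 ↔
      (∀ i, i + 1 < n →
        E *ᵥ seqX v i + A *ᵥ seqX v (i + 1) + B *ᵥ seqW v (i + 1) = 0) ∧
      (E *ᵥ seqX v (n - 1) + A *ᵥ seqZ v 0 = 0) ∧
      (∀ j, C *ᵥ seqZ v j = 0) ∧
      (∀ j, E *ᵥ seqZ v j + A *ᵥ seqZ v (j + 1) = 0) := by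
  classical
  have h0n : 0 < n := hn
  set v₁ : Fin n × (Fin n ⊕ Fin l) → ℝ := fun q => v (Sum.inl q) with hv₁
  set v₂ : Fin n × Fin n → ℝ := fun q => v (Sum.inr q) with hv₂
  have hv : v = Sum.elim v₁ v₂ := by funext q; rcases q with q | q <;> rfl
  have hmul : M0 E A B C *ᵥ v = Sum.elim
      ((Fmat n (Matrix.fromCols E (0 : Matrix (Fin m) (Fin l) ℝ))
          (Matrix.fromCols A B)) *ᵥ v₁ + calA A *ᵥ v₂)
      ((Matrix.fromRows (firstBlockCol n C)
          (Fmat n (Matrix.fromRows E (0 : Matrix (Fin p) (Fin n) ℝ))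
            (Matrix.fromRows A C))) *ᵥ v₂) := by
    rw [M0, hv, Matrix.fromBlocks_mulVec]
    simp
  -- row formulas
  have hrow1 : ∀ (i : Fin n) (s : Fin m),
      ((Fmat n (Matrix.fromCols E (0 : Matrix (Fin m) (Fin l) ℝ))
          (Matrix.fromCols A B)) *ᵥ v₁) (i, s)
      = (E *ᵥ seqX v (i : ℕ)) s
        + ((A *ᵥ seqX v ((i : ℕ) + 1)) s + (B *ᵥ seqW v ((i : ℕ) + 1)) s) := by
    intro i s
    rw [Fmat_mulVec_s9]
    have hfun : (fun t => v₁ (i, t))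
        = Sum.elim (fun a => v₁ (i, Sum.inl a)) (fun b => v₁ (i, Sum.inr b)) := by
      funext t; rcases t with a | a <;> rfl
    have hX : seqX v (i : ℕ) = fun a => v₁ (i, Sum.inl a) := by
      rw [seqX, dif_pos i.isLt]
    congr 1
    · rw [hfun, Matrix.fromCols_mulVec_sumElim, hX]
      simp
    · by_cases h : (i : ℕ) + 1 < n
      · rw [dif_pos h]
        have hfun2 : (fun t => v₁ (⟨(i : ℕ) + 1, h⟩, t))
            = Sum.elim (fun a => v₁ (⟨(i : ℕ) + 1, h⟩, Sum.inl a))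
                (fun b => v₁ (⟨(i : ℕ) + 1, h⟩, Sum.inr b)) := by
          funext t; rcases t with a | a <;> rfl
        have hX2 : seqX v ((i : ℕ) + 1) = fun a => v₁ (⟨(i : ℕ) + 1, h⟩, Sum.inl a) := by
          rw [seqX, dif_pos h]
        have hW2 : seqW v ((i : ℕ) + 1) = fun a => v₁ (⟨(i : ℕ) + 1, h⟩, Sum.inr a) := by
          rw [seqW, dif_pos h]
        rw [hfun2, Matrix.fromCols_mulVec_sumElim, hX2, hW2]
        simp
      · rw [dif_neg h]
        have hX2 : seqX v ((i : ℕ) + 1) = 0 := by rw [seqX, dif_neg h]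
        have hW2 : seqW v ((i : ℕ) + 1) = 0 := by rw [seqW, dif_neg h]
        rw [hX2, hW2]
        simp
  have hrow5 : ∀ (i : Fin n) (s : Fin m),
      (calA A *ᵥ v₂) (i, s)
        = if (i : ℕ) = n - 1 then (A *ᵥ seqZ v 0) s else 0 := by
    intro i s
    rw [calA_mulVec A h0n]
    have hZ : seqZ v 0 = fun t => v₂ (⟨0, h0n⟩, t) := by
      rw [seqZ, dif_pos h0n]
    rw [hZ]
  have hrow2 : ∀ c : Fin p,
      ((Matrix.fromRows (firstBlockCol n C)
          (Fmat n (Matrix.fromRows E (0 : Matrix (Fin p) (Fin n) ℝ))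
            (Matrix.fromRows A C))) *ᵥ v₂) (Sum.inl c) = (C *ᵥ seqZ v 0) c := by
    intro c
    rw [Matrix.fromRows_mulVec]
    show (firstBlockCol n C *ᵥ v₂) c = _
    rw [firstBlockCol_mulVec C h0n]
    have hZ : seqZ v 0 = fun t => v₂ (⟨0, h0n⟩, t) := by
      rw [seqZ, dif_pos h0n]
    rw [hZ]
  have hZj : ∀ (j : Fin n), seqZ v (j : ℕ) = fun t => v₂ (j, t) := by
    intro j
    rw [seqZ, dif_pos j.isLt]
  have hrow34 : ∀ (j : Fin n) (s : Fin m ⊕ Fin p),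
      ((Matrix.fromRows (firstBlockCol n C)
          (Fmat n (Matrix.fromRows E (0 : Matrix (Fin p) (Fin n) ℝ))
            (Matrix.fromRows A C))) *ᵥ v₂) (Sum.inr (j, s))
      = Sum.elim
          (fun s' => (E *ᵥ seqZ v (j : ℕ)) s' + (A *ᵥ seqZ v ((j : ℕ) + 1)) s')
          (fun c' => (C *ᵥ seqZ v ((j : ℕ) + 1)) c') s := by
    intro j s
    rw [Matrix.fromRows_mulVec]
    show (Fmat n (Matrix.fromRows E (0 : Matrix (Fin p) (Fin n) ℝ))
        (Matrix.fromRows A C) *ᵥ v₂) (j, s) = _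
    rw [Fmat_mulVec_s9]
    rw [hZj j]
    by_cases h : (j : ℕ) + 1 < n
    · rw [dif_pos h]
      have hZ2 : seqZ v ((j : ℕ) + 1) = fun t => v₂ (⟨(j : ℕ) + 1, h⟩, t) := by
        rw [seqZ, dif_pos h]
      rw [hZ2]
      rcases s with s' | c' <;> simp [Matrix.fromRows_mulVec]
    · rw [dif_neg h]
      have hZ2 : seqZ v ((j : ℕ) + 1) = 0 := by rw [seqZ, dif_neg h]
      rw [hZ2]
      rcases s with s' | c' <;> simp [Matrix.fromRows_mulVec]
  constructor
  · intro h
    have hall : ∀ x, (M0 E A B C *ᵥ v) x = 0 := fun x => by rw [h]; rfl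
    refine ⟨?_, ?_, ?_, ?_⟩
    · intro i hi
      funext s
      have hx := hall (Sum.inl (⟨i, by omega⟩, s))
      rw [hmul] at hx
      simp only [Sum.elim_inl, Pi.add_apply] at hx
      rw [hrow1, hrow5] at hx
      have hne : ¬ ((⟨i, by omega⟩ : Fin n) : ℕ) = n - 1 := by simp; omega
      rw [if_neg hne] at hx
      simp only [Pi.add_apply]
      have : ((⟨i, by omega⟩ : Fin n) : ℕ) = i := rfl
      rw [this] at hx
      show (E *ᵥ seqX v i) s + (A *ᵥ seqX v (i + 1)) s + (B *ᵥ seqW v (i + 1)) s = 0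
      linarith
    · funext s
      have hx := hall (Sum.inl (⟨n - 1, by omega⟩, s))
      rw [hmul] at hx
      simp only [Sum.elim_inl, Pi.add_apply] at hx
      rw [hrow1, hrow5] at hx
      have he : ((⟨n - 1, by omega⟩ : Fin n) : ℕ) = n - 1 := rfl
      rw [if_pos he, he] at hx
      have hX2 : seqX v (n - 1 + 1) = 0 := by rw [seqX, dif_neg (by omega)]
      have hW2 : seqW v (n - 1 + 1) = 0 := by rw [seqW, dif_neg (by omega)]
      rw [hX2, hW2] at hx
      simp only [Matrix.mulVec_zero, Pi.zero_apply, add_zero] at hx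
      show (E *ᵥ seqX v (n - 1)) s + (A *ᵥ seqZ v 0) s = 0
      linarith
    · intro j
      match j with
      | 0 =>
        funext c
        have hx := hall (Sum.inr (Sum.inl c))
        rw [hmul] at hx
        simp only [Sum.elim_inr] at hx
        rw [hrow2] at hx
        exact hx
      | j' + 1 =>
        by_cases hj : j' < n
        · funext c
          have hx := hall (Sum.inr (Sum.inr (⟨j', hj⟩, Sum.inr c)))
          rw [hmul] at hx
          simp only [Sum.elim_inr] at hx
          rw [hrow34] at hx
          simpa using hx
        · have : seqZ v (j' + 1) = 0 := by rw [seqZ, dif_neg (by omega)]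
          rw [this]
          simp
    · intro j
      by_cases hj : j < n
      · funext s
        have hx := hall (Sum.inr (Sum.inr (⟨j, hj⟩, Sum.inl s)))
        rw [hmul] at hx
        simp only [Sum.elim_inr] at hx
        rw [hrow34] at hx
        simpa using hx
      · have h1 : seqZ v j = 0 := by rw [seqZ, dif_neg (by omega)]
        have h2 : seqZ v (j + 1) = 0 := by rw [seqZ, dif_neg (by omega)]
        rw [h1, h2]
        simp
  · rintro ⟨P1, P2, P3, P4⟩
    rw [hmul]
    funext x
    rcases x with ⟨i, s⟩ | (c | ⟨j, s'⟩)
    · simp only [Sum.elim_inl, Pi.add_apply, Pi.zero_apply]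
      rw [hrow1, hrow5]
      by_cases h : (i : ℕ) + 1 < n
      · have hne : ¬ ((i : ℕ) = n - 1) := by omega
        rw [if_neg hne]
        have := congrFun (P1 (i : ℕ) h) s
        simp only [Pi.add_apply, Pi.zero_apply] at this
        linarith
      · have he : (i : ℕ) = n - 1 := by have := i.isLt; omega
        rw [if_pos he, he]
        have hX2 : seqX v (n - 1 + 1) = 0 := by rw [seqX, dif_neg (by omega)]
        have hW2 : seqW v (n - 1 + 1) = 0 := by rw [seqW, dif_neg (by omega)]
        rw [hX2, hW2]
        have := congrFun P2 s
        simp only [Pi.add_apply, Pi.zero_apply] at this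
        simp only [Matrix.mulVec_zero, Pi.zero_apply, add_zero]
        linarith
    · simp only [Sum.elim_inr, Pi.zero_apply]
      rw [hrow2]
      rw [P3 0]
      rfl
    · simp only [Sum.elim_inr, Pi.zero_apply]
      rw [hrow34]
      rcases s' with s | c
      · have := congrFun (P4 (j : ℕ)) s
        simp only [Pi.add_apply, Pi.zero_apply] at this
        simpa using this
      · have := congrFun (P3 ((j : ℕ) + 1)) c
        simpa using this

lemma NK_mulVec (hn : 1 ≤ n) (K : Matrix (Fin r) (Fin n) ℝ)
    (v : (Fin n × (Fin n ⊕ Fin l)) ⊕ Fin n × Fin n → ℝ) :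
    NK (l := l) K *ᵥ v = K *ᵥ seqZ v 0 := by
  classical
  have h0n : 0 < n := hn
  have hv : v = Sum.elim (fun q => v (Sum.inl q)) (fun q => v (Sum.inr q)) := by
    funext q; rcases q with q | q <;> rfl
  have hL : NK (l := l) K *ᵥ v
      = (0 : Matrix (Fin r) (Fin n × (Fin n ⊕ Fin l)) ℝ) *ᵥ (fun q => v (Sum.inl q))
        + firstBlockCol n K *ᵥ (fun q => v (Sum.inr q)) := by
    conv_lhs => rw [NK, hv]
    rw [Matrix.fromCols_mulVec_sumElim]
  rw [hL]
  funext i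
  simp only [Matrix.zero_mulVec, Pi.add_apply, Pi.zero_apply, zero_add]
  rw [firstBlockCol_mulVec K h0n]
  have hZ : seqZ v 0 = fun t => v (Sum.inr (⟨0, h0n⟩, t)) := by
    rw [seqZ, dif_pos h0n]
  rw [hZ]

end Kernel

/-- Equivalence of statements (i) and (iv) of Theorem 3.10: the rank condition (3.14b)
holds iff `A⁻¹(E·V^{n−1}_{[E,A,B,0]}) ∩ W*_{[E,A,0,C]} ⊆ ker K`. -/
theorem stmt_9 {m n l p r : ℕ} (hn : 1 ≤ n)
    (E A : Matrix (Fin m) (Fin n) ℝ) (B : Matrix (Fin m) (Fin l) ℝ)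
    (C : Matrix (Fin p) (Fin n) ℝ) (K : Matrix (Fin r) (Fin n) ℝ) :
    (Matrix.fromBlocks
        (Fmat n (Matrix.fromCols E (0 : Matrix (Fin m) (Fin l) ℝ))
          (Matrix.fromCols A B))
        (calA A) 0
        (Matrix.fromRows (firstBlockCol n C)
          (Matrix.fromRows
            (Fmat n (Matrix.fromRows E (0 : Matrix (Fin p) (Fin n) ℝ))
              (Matrix.fromRows A C))
            (firstBlockCol n K)))).rank =
      (Matrix.fromBlocks
        (Fmat n (Matrix.fromCols E (0 : Matrix (Fin m) (Fin l) ℝ))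
          (Matrix.fromCols A B))
        (calA A) 0
        (Matrix.fromRows (firstBlockCol n C)
          (Fmat n (Matrix.fromRows E (0 : Matrix (Fin p) (Fin n) ℝ))
            (Matrix.fromRows A C)))).rank ↔
    Submodule.comap A.mulVecLin
        (Submodule.map E.mulVecLin
          (WongV E A B (0 : Matrix (Fin 1) (Fin n) ℝ) (n - 1))) ⊓
      (⨆ i, WongW E A (0 : Matrix (Fin m) (Fin 1) ℝ) C i) ≤
    LinearMap.ker K.mulVecLin := by
  classical
  have h0n : 0 < n := hn
  let ρ : ((Fin n × Fin m) ⊕ (Fin p ⊕ ((Fin n × (Fin m ⊕ Fin p)) ⊕ Fin r)))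
      ≃ (((Fin n × Fin m) ⊕ (Fin p ⊕ Fin n × (Fin m ⊕ Fin p))) ⊕ Fin r) :=
    { toFun := fun x => match x with
        | Sum.inl a => Sum.inl (Sum.inl a)
        | Sum.inr (Sum.inl b) => Sum.inl (Sum.inr (Sum.inl b))
        | Sum.inr (Sum.inr (Sum.inl c)) => Sum.inl (Sum.inr (Sum.inr c))
        | Sum.inr (Sum.inr (Sum.inr d)) => Sum.inr d
      invFun := fun x => match x with
        | Sum.inl (Sum.inl a) => Sum.inl a
        | Sum.inl (Sum.inr (Sum.inl b)) => Sum.inr (Sum.inl b)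
        | Sum.inl (Sum.inr (Sum.inr c)) => Sum.inr (Sum.inr (Sum.inl c))
        | Sum.inr d => Sum.inr (Sum.inr (Sum.inr d))
      left_inv := by rintro (a | (b | (c | d))) <;> rfl
      right_inv := by rintro ((a | (b | c)) | d) <;> rfl }
  have hfull : (Matrix.fromBlocks
        (Fmat n (Matrix.fromCols E (0 : Matrix (Fin m) (Fin l) ℝ))
          (Matrix.fromCols A B))
        (calA A) 0
        (Matrix.fromRows (firstBlockCol n C)
          (Matrix.fromRows
            (Fmat n (Matrix.fromRows E (0 : Matrix (Fin p) (Fin n) ℝ))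
              (Matrix.fromRows A C))
            (firstBlockCol n K))))
      = (Matrix.fromRows (M0 E A B C) (NK (l := l) K)).submatrix ρ (Equiv.refl _) := by
    ext x q
    rcases x with ⟨i, s⟩ | (c | (⟨j, t⟩ | d)) <;> rcases q with q | q <;> rfl
  have hM0 : (Matrix.fromBlocks
        (Fmat n (Matrix.fromCols E (0 : Matrix (Fin m) (Fin l) ℝ))
          (Matrix.fromCols A B))
        (calA A) 0
        (Matrix.fromRows (firstBlockCol n C)
          (Fmat n (Matrix.fromRows E (0 : Matrix (Fin p) (Fin n) ℝ))
            (Matrix.fromRows A C))))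
      = M0 E A B C := rfl
  rw [hfull, hM0, rank_submatrix_row_equiv, rank_fromRows_eq_iff]
  constructor
  · intro h z hz
    rw [Submodule.mem_inf] at hz
    obtain ⟨hzV, hzW⟩ := hz
    rw [wongW_iSup E A (0 : Matrix (Fin m) (Fin 1) ℝ) C] at hzW
    rw [Submodule.mem_comap] at hzV
    obtain ⟨u, hu, hAu⟩ := Submodule.mem_map.mp hzV
    obtain ⟨Z, hZ0, hmem, hchain, hCc⟩ := wongW_chain E A C n z hzW
    obtain ⟨X, Wc, hXlast, hXchain⟩ := wongV_chain E A B (n - 1) (-u) (neg_mem hu)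
    set v : (Fin n × (Fin n ⊕ Fin l)) ⊕ Fin n × Fin n → ℝ :=
      Sum.elim (fun q => Sum.elim (X ((q.1 : ℕ))) (Wc ((q.1 : ℕ))) q.2)
        (fun q => Z ((q.1 : ℕ)) q.2) with hvdef
    have hsX : ∀ i : ℕ, i < n → seqX v i = X i := by
      intro i hi; rw [seqX, dif_pos hi]; funext t; rfl
    have hsW : ∀ i : ℕ, i < n → seqW v i = Wc i := by
      intro i hi; rw [seqW, dif_pos hi]; funext t; rfl
    have hsZ : ∀ j : ℕ, j < n → seqZ v j = Z j := by
      intro j hj; rw [seqZ, dif_pos hj]; funext t; rfl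
    have hker : M0 E A B C *ᵥ v = 0 := by
      rw [mem_ker_M0 hn]
      refine ⟨?_, ?_, ?_, ?_⟩
      · intro i hi
        rw [hsX i (by omega), hsX (i + 1) hi, hsW (i + 1) hi]
        exact hXchain i (by omega)
      · rw [hsX (n - 1) (by omega), hsZ 0 h0n, hZ0, hXlast]
        rw [Matrix.mulVec_neg]
        have hA : A *ᵥ z = E *ᵥ u := by
          have := hAu.symm
          simpa [Matrix.mulVecLin_apply] using this
        rw [hA, neg_add_cancel]
      · intro j
        by_cases hj : j < n
        · rw [hsZ j hj]; exact hCc j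
        · rw [show seqZ v j = 0 from by rw [seqZ, dif_neg hj]]
          simp
      · intro j
        by_cases hj1 : j + 1 < n
        · rw [hsZ j (by omega), hsZ (j + 1) hj1]; exact hchain j
        · by_cases hj : j < n
          · have hZn : Z (j + 1) = 0 := by
              have hm := hmem (j + 1)
              have hz0 : n - (j + 1) = 0 := by omega
              rw [hz0] at hm
              simpa [WongW] using hm
            have h2 : seqZ v (j + 1) = 0 := by rw [seqZ, dif_neg (by omega)]
            rw [hsZ j hj, h2]
            have hc := hchain j
            rw [hZn] at hc
            exact hc
          · have h1 : seqZ v j = 0 := by rw [seqZ, dif_neg hj]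
            have h2 : seqZ v (j + 1) = 0 := by rw [seqZ, dif_neg (by omega)]
            rw [h1, h2]; simp
    have hv_ker : v ∈ LinearMap.ker (M0 E A B C).mulVecLin := by
      rw [LinearMap.mem_ker, Matrix.mulVecLin_apply]; exact hker
    have hNv := h hv_ker
    rw [LinearMap.mem_ker, Matrix.mulVecLin_apply, NK_mulVec hn] at hNv
    rw [hsZ 0 h0n, hZ0] at hNv
    rw [LinearMap.mem_ker, Matrix.mulVecLin_apply]
    exact hNv
  · intro h v hv
    rw [LinearMap.mem_ker, Matrix.mulVecLin_apply] at hv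
    rw [LinearMap.mem_ker, Matrix.mulVecLin_apply, NK_mulVec hn]
    obtain ⟨P1, P2, P3, P4⟩ := (mem_ker_M0 hn E A B C v).mp hv
    have hz0 : seqZ v 0 ∈ Submodule.comap A.mulVecLin
        (Submodule.map E.mulVecLin
          (WongV E A B (0 : Matrix (Fin 1) (Fin n) ℝ) (n - 1))) ⊓
        (⨆ i, WongW E A (0 : Matrix (Fin m) (Fin 1) ℝ) C i) := by
      rw [Submodule.mem_inf]
      constructor
      · rw [Submodule.mem_comap]
        refine Submodule.mem_map.mpr ⟨-(seqX v (n - 1)), neg_mem ?_, ?_⟩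
        · exact wongV_forward E A B (n - 1) (seqX v) (seqW v)
            (fun i hi => P1 i (by omega))
        · show E *ᵥ (-(seqX v (n - 1))) = A *ᵥ seqZ v 0
          rw [Matrix.mulVec_neg]
          exact neg_eq_of_add_eq_zero_right P2
      · exact Submodule.mem_iSup_of_mem n
          (wongW_back E A C n (seqZ v) P4 P3 (by rw [seqZ, dif_neg (by omega)]))
    have hK := h hz0
    rw [LinearMap.mem_ker, Matrix.mulVecLin_apply] at hK
    exact hK
end Wong
end RankAux
end
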